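/- For all u₁, u₂, w ∈ (0,1/2) and λ ∈ [0,1] such that L(w) = λ·L(u₁) + (1−λ)·L(u₂), one has J(w) ≤ λ·J(u₁) + (1−λ)·J(u₂). (Equivalently, the function x ↦ J(L⁻¹(x)) is convex on (0,∞).) -/

import Mathlib

/-- Binary entropy function. -/
noncomputable def H2 (x : ℝ) : ℝ := -x * Real.logb 2 x - (1 - x) * Real.logb 2 (1 - x)

/-- `J`, the derivative of the binary entropy function. -/
noncomputable def J (x : ℝ) : ℝ := Real.logb 2 ((1 - x) / x)

/-- `L(u) = 2·H₂(u)/(1 − 2u)` for `u ∈ [0,1/2)` (with `L(0) = 0`). -/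
noncomputable def L (u : ℝ) : ℝ := 2 * H2 u / (1 - 2 * u)

noncomputable def hh (u : ℝ) : ℝ := -u * Real.log u - (1 - u) * Real.log (1 - u)
noncomputable def jj (u : ℝ) : ℝ := Real.log (1 - u) - Real.log u
noncomputable def GG (u : ℝ) : ℝ := 2 * (1 - 2*u) * jj u + 4 * hh u
noncomputable def QQ (u : ℝ) : ℝ := u * (1 - u) * GG u
noncomputable def PP (u : ℝ) : ℝ := (1 - 2*u)^2
noncomputable def Phi (u : ℝ) : ℝ := QQ u / PP u
noncomputable def ll (u : ℝ) : ℝ := 2 * hh u / (1 - 2*u)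
noncomputable def psi (u : ℝ) : ℝ := (1 - 2*u) * jj u + 2 * hh u - (1 - 2*u)^2

lemma oneSub_hasDerivAt (u : ℝ) : HasDerivAt (fun x : ℝ => 1 - x) (-1) u := by
  simpa using (hasDerivAt_id u).const_sub 1

lemma hh_hasDerivAt {u : ℝ} (h0 : 0 < u) (h1 : u < 1) : HasDerivAt hh (jj u) u := by
  have hu : u ≠ 0 := ne_of_gt h0
  have hu1 : (1 : ℝ) - u ≠ 0 := by linarith
  have dlog : HasDerivAt (fun x : ℝ => Real.log (1 - x)) (-1 / (1 - u)) u :=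
    (oneSub_hasDerivAt u).log hu1
  have d := (((hasDerivAt_id u).mul (Real.hasDerivAt_log hu)).neg).sub
    ((oneSub_hasDerivAt u).mul dlog)
  convert d using 1
  · rfl
  · rfl
  · funext x; simp only [hh, id_eq, Pi.neg_apply, Pi.sub_apply, Pi.mul_apply]; ring
  · simp only [jj, id_eq]; field_simp; ring

lemma jj_hasDerivAt {u : ℝ} (h0 : 0 < u) (h1 : u < 1) :
    HasDerivAt jj (-(1 / (u * (1 - u)))) u := by
  have hu : u ≠ 0 := ne_of_gt h0
  have hu1 : (1 : ℝ) - u ≠ 0 := by linarith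
  have dlog : HasDerivAt (fun x : ℝ => Real.log (1 - x)) (-1 / (1 - u)) u :=
    (oneSub_hasDerivAt u).log hu1
  have d := dlog.sub (Real.hasDerivAt_log hu)
  convert d using 1
  · rfl
  · rfl
  · rfl
  field_simp
  ring

lemma GG_hasDerivAt {u : ℝ} (h0 : 0 < u) (h1 : u < 1) :
    HasDerivAt GG (-(2 * (1 - 2*u) / (u * (1 - u)))) u := by
  have hu : u ≠ 0 := ne_of_gt h0
  have hu1 : (1 : ℝ) - u ≠ 0 := by linarith
  have hb := (((hasDerivAt_id u).const_mul 2).const_sub 1).const_mul 2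
  have d := (hb.mul (jj_hasDerivAt h0 h1)).add ((hh_hasDerivAt h0 h1).const_mul 4)
  convert d using 1
  · rfl
  · rfl
  · rfl
  simp only [jj, id_eq]; field_simp; ring

lemma QQ_hasDerivAt {u : ℝ} (h0 : 0 < u) (h1 : u < 1) :
    HasDerivAt QQ ((1 - 2*u) * (GG u - 2)) u := by
  have hu : u ≠ 0 := ne_of_gt h0
  have hu1 : (1 : ℝ) - u ≠ 0 := by linarith
  have hb := (hasDerivAt_id u).mul (oneSub_hasDerivAt u)
  have d := hb.mul (GG_hasDerivAt h0 h1)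
  convert d using 1
  · rfl
  · rfl
  · rfl
  simp only [id_eq, Pi.mul_apply]; field_simp; ring

lemma PP_hasDerivAt (u : ℝ) : HasDerivAt PP (-4 * (1 - 2*u)) u := by
  have d := (((hasDerivAt_id u).const_mul 2).const_sub 1).pow 2
  convert d using 1
  · rfl
  · rfl
  · rfl
  simp only [id_eq]; push_cast; ring

lemma ll_hasDerivAt {u : ℝ} (h0 : 0 < u) (h1 : u < 1/2) :
    HasDerivAt ll (GG u / PP u) u := by
  have hu1 : u < 1 := by linarith
  have hden : (1 : ℝ) - 2*u ≠ 0 := by nlinarith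
  have hb := ((hasDerivAt_id u).const_mul 2).const_sub 1
  have d := ((hh_hasDerivAt h0 hu1).const_mul 2).div hb hden
  convert d using 1
  · rfl
  · rfl
  · rfl
  simp only [GG, PP, jj, id_eq]; field_simp; ring

lemma psi_nonneg {u : ℝ} (h0 : 0 < u) (h1 : u < 1/2) : 0 ≤ psi u := by
  have hu1 : (0:ℝ) < 1 - u := by linarith
  have hh0 : 0 ≤ hh u := by
    have l1 : Real.log u ≤ 0 := Real.log_nonpos (le_of_lt h0) (by linarith)
    have l2 : Real.log (1 - u) ≤ 0 := Real.log_nonpos (by linarith) (by linarith)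
    unfold hh; nlinarith
  have hj : (1 - 2*u) / (1 - u) ≤ jj u := by
    have hx : (0:ℝ) < u / (1 - u) := by positivity
    have hl := Real.log_le_sub_one_of_pos hx
    rw [Real.log_div (ne_of_gt h0) (ne_of_gt hu1)] at hl
    have h2 : u / (1 - u) - 1 = -((1 - 2*u)/(1-u)) := by field_simp; ring
    rw [h2] at hl
    unfold jj; linarith
  have h12 : (0:ℝ) ≤ 1 - 2*u := by linarith
  have key : (1 - 2*u) * ((1 - 2*u)/(1-u)) ≤ (1 - 2*u) * jj u :=
    mul_le_mul_of_nonneg_left hj h12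
  have h3 : (1 - 2*u)^2 ≤ (1 - 2*u) * ((1 - 2*u)/(1-u)) := by
    rw [mul_div_assoc', le_div_iff₀ hu1]
    nlinarith
  unfold psi
  linarith

lemma jj_pos {u : ℝ} (h0 : 0 < u) (h1 : u < 1/2) : 0 < jj u := by
  unfold jj
  have : Real.log u < Real.log (1 - u) := Real.log_lt_log h0 (by linarith)
  linarith

lemma hh_nonneg {u : ℝ} (h0 : 0 < u) (h1 : u < 1) : 0 ≤ hh u := by
  have l1 : Real.log u ≤ 0 := Real.log_nonpos (le_of_lt h0) (by linarith)
  have l2 : Real.log (1 - u) ≤ 0 := Real.log_nonpos (by linarith) (by linarith)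
  unfold hh; nlinarith

lemma GG_pos {u : ℝ} (h0 : 0 < u) (h1 : u < 1/2) : 0 < GG u := by
  have := jj_pos h0 h1
  have := hh_nonneg h0 (by linarith)
  unfold GG; nlinarith

lemma QQ_pos {u : ℝ} (h0 : 0 < u) (h1 : u < 1/2) : 0 < QQ u := by
  have h2 : (0:ℝ) < 1 - u := by linarith
  exact mul_pos (mul_pos h0 h2) (GG_pos h0 h1)

lemma PP_pos {u : ℝ} (h1 : u < 1/2) : 0 < PP u := by
  unfold PP; nlinarith

lemma Phi_hasDerivAt {u : ℝ} (h0 : 0 < u) (h1 : u < 1/2) :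
    HasDerivAt Phi (2 * (1 - 2*u) * psi u / (PP u)^2) u := by
  have hu1 : u < 1 := by linarith
  have hP : PP u ≠ 0 := ne_of_gt (PP_pos h1)
  have d := (QQ_hasDerivAt h0 hu1).div (PP_hasDerivAt u) hP
  have E : Phi = fun x : ℝ => QQ x / PP x := rfl
  rw [E]
  convert d using 1
  · rfl
  · rfl
  · rfl
  unfold QQ GG PP psi
  field_simp
  ring

lemma Phi_mono : MonotoneOn Phi (Set.Ioo (0:ℝ) (1/2)) := by
  have hD : Convex ℝ (Set.Ioo (0:ℝ) (1/2)) := convex_Ioo _ _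
  have hd : ∀ x ∈ Set.Ioo (0:ℝ) (1/2), HasDerivAt Phi (2 * (1 - 2*x) * psi x / (PP x)^2) x :=
    fun x hx => Phi_hasDerivAt hx.1 hx.2
  apply monotoneOn_of_deriv_nonneg hD
  · exact fun x hx => (hd x hx).continuousAt.continuousWithinAt
  · rw [interior_Ioo]
    exact fun x hx => (hd x hx).differentiableAt.differentiableWithinAt
  · rw [interior_Ioo]
    intro x hx
    rw [(hd x hx).deriv]
    have := psi_nonneg hx.1 hx.2
    have hP := PP_pos hx.2
    have : (0:ℝ) ≤ 1 - 2*x := by linarith [hx.2]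
    positivity

lemma FF_hasDerivAt {w x : ℝ} (hx : x ∈ Set.Ioo (0:ℝ) (1/2)) :
    HasDerivAt (fun y => jj y - (-(PP w / QQ w)) * ll y)
      (-(1 / (x * (1 - x))) + (PP w / QQ w) * (GG x / PP x)) x := by
  have d := (jj_hasDerivAt hx.1 (by linarith [hx.2])).sub
    ((ll_hasDerivAt hx.1 hx.2).const_mul (-(PP w / QQ w)))
  convert d using 1
  · rfl
  · rfl
  · rfl
  ring

lemma QQ_eq {x : ℝ} (h0 : 0 < x) (h1 : x < 1/2) :
    1 / (x * (1 - x)) = GG x / QQ x := by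
  have hG := GG_pos h0 h1
  have hx1 : (0:ℝ) < 1 - x := by linarith
  unfold QQ
  field_simp

lemma deriv_sign_le {w x : ℝ} (hw : w ∈ Set.Ioo (0:ℝ) (1/2)) (hx : x ∈ Set.Ioo (0:ℝ) (1/2))
    (h : Phi x ≤ Phi w) :
    -(1 / (x * (1 - x))) + (PP w / QQ w) * (GG x / PP x) ≤ 0 := by
  have hQx := QQ_pos hx.1 hx.2
  have hPx := PP_pos hx.2
  have hQw := QQ_pos hw.1 hw.2
  have hPw := PP_pos hw.2
  have hGx := GG_pos hx.1 hx.2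
  have h1 : QQ x * PP w ≤ QQ w * PP x := by
    rw [Phi, Phi, div_le_div_iff₀ hPx hPw] at h
    linarith
  rw [QQ_eq hx.1 hx.2]
  rw [div_mul_div_comm]
  rw [← sub_nonpos]  -- no-op shaping
  have : PP w * GG x / (QQ w * PP x) ≤ GG x / QQ x := by
    rw [div_le_div_iff₀ (by positivity) hQx]
    nlinarith
  linarith

lemma deriv_sign_ge {w x : ℝ} (hw : w ∈ Set.Ioo (0:ℝ) (1/2)) (hx : x ∈ Set.Ioo (0:ℝ) (1/2))
    (h : Phi w ≤ Phi x) :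
    0 ≤ -(1 / (x * (1 - x))) + (PP w / QQ w) * (GG x / PP x) := by
  have hQx := QQ_pos hx.1 hx.2
  have hPx := PP_pos hx.2
  have hQw := QQ_pos hw.1 hw.2
  have hPw := PP_pos hw.2
  have hGx := GG_pos hx.1 hx.2
  have h1 : QQ w * PP x ≤ QQ x * PP w := by
    rw [Phi, Phi, div_le_div_iff₀ hPw hPx] at h
    linarith
  rw [QQ_eq hx.1 hx.2]
  have : GG x / QQ x ≤ PP w * GG x / (QQ w * PP x) := by
    rw [div_le_div_iff₀ hQx (by positivity)]
    nlinarith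
  rw [div_mul_div_comm]
  linarith

lemma tangent {w u : ℝ} (hw : w ∈ Set.Ioo (0:ℝ) (1/2)) (hu : u ∈ Set.Ioo (0:ℝ) (1/2)) :
    jj w - (-(PP w / QQ w)) * ll w ≤ jj u - (-(PP w / QQ w)) * ll u := by
  set c : ℝ := -(PP w / QQ w) with hc
  set F : ℝ → ℝ := fun y => jj y - c * ll y with hF
  rcases le_total u w with hle | hle
  · -- F antitone on [u, w]
    have hsub : Set.Icc u w ⊆ Set.Ioo (0:ℝ) (1/2) := by
      intro y hy; exact ⟨lt_of_lt_of_le hu.1 hy.1, lt_of_le_of_lt hy.2 hw.2⟩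
    have hanti : AntitoneOn F (Set.Icc u w) := by
      apply antitoneOn_of_deriv_nonpos (convex_Icc u w)
      · exact fun y hy => (FF_hasDerivAt (hsub hy)).continuousAt.continuousWithinAt
      · rw [interior_Icc]
        exact fun y hy => (FF_hasDerivAt (hsub (Set.Ioo_subset_Icc_self hy))).differentiableAt.differentiableWithinAt
      · rw [interior_Icc]
        intro y hy
        have hy' := hsub (Set.Ioo_subset_Icc_self hy)
        rw [(FF_hasDerivAt hy').deriv]
        exact deriv_sign_le hw hy' (Phi_mono hy' hw (le_of_lt hy.2))
    exact hanti (Set.left_mem_Icc.2 hle) (Set.right_mem_Icc.2 hle) hle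
  · -- F monotone on [w, u]
    have hsub : Set.Icc w u ⊆ Set.Ioo (0:ℝ) (1/2) := by
      intro y hy; exact ⟨lt_of_lt_of_le hw.1 hy.1, lt_of_le_of_lt hy.2 hu.2⟩
    have hmono : MonotoneOn F (Set.Icc w u) := by
      apply monotoneOn_of_deriv_nonneg (convex_Icc w u)
      · exact fun y hy => (FF_hasDerivAt (hsub hy)).continuousAt.continuousWithinAt
      · rw [interior_Icc]
        exact fun y hy => (FF_hasDerivAt (hsub (Set.Ioo_subset_Icc_self hy))).differentiableAt.differentiableWithinAt
      · rw [interior_Icc]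
        intro y hy
        have hy' := hsub (Set.Ioo_subset_Icc_self hy)
        rw [(FF_hasDerivAt hy').deriv]
        exact deriv_sign_ge hw hy' (Phi_mono hw hy' (le_of_lt hy.1))
    exact hmono (Set.left_mem_Icc.2 hle) (Set.right_mem_Icc.2 hle) hle

lemma log2_pos : (0:ℝ) < Real.log 2 := Real.log_pos one_lt_two

lemma L_eq {x : ℝ} (h0 : 0 < x) (h1 : x < 1/2) : L x = ll x / Real.log 2 := by
  have hlog : Real.log 2 ≠ 0 := ne_of_gt log2_pos
  have hden : (1:ℝ) - 2*x ≠ 0 := by intro h; nlinarith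
  unfold L H2 ll hh Real.logb
  field_simp

lemma J_eq {x : ℝ} (h0 : 0 < x) (h1 : x < 1/2) : J x = jj x / Real.log 2 := by
  have hx1 : (1:ℝ) - x ≠ 0 := by intro h; nlinarith
  unfold J jj Real.logb
  rw [Real.log_div hx1 (ne_of_gt h0)]

theorem stmt15 (u₁ u₂ w lam : ℝ)
    (hu₁ : u₁ ∈ Set.Ioo (0 : ℝ) (1 / 2)) (hu₂ : u₂ ∈ Set.Ioo (0 : ℝ) (1 / 2))
    (hw : w ∈ Set.Ioo (0 : ℝ) (1 / 2)) (hlam : lam ∈ Set.Icc (0 : ℝ) 1)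
    (hL : L w = lam * L u₁ + (1 - lam) * L u₂) :
    J w ≤ lam * J u₁ + (1 - lam) * J u₂ := by
  have hlog : Real.log 2 ≠ 0 := ne_of_gt log2_pos
  have hll : ll w = lam * ll u₁ + (1 - lam) * ll u₂ := by
    rw [L_eq hw.1 hw.2, L_eq hu₁.1 hu₁.2, L_eq hu₂.1 hu₂.2] at hL
    field_simp at hL
    linarith
  set c : ℝ := -(PP w / QQ w) with hc
  have t1 := tangent hw hu₁
  have t2 := tangent hw hu₂
  rw [← hc] at t1 t2
  have e1 : lam * (jj w - c * ll w) ≤ lam * (jj u₁ - c * ll u₁) :=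
    mul_le_mul_of_nonneg_left t1 hlam.1
  have e2 : (1 - lam) * (jj w - c * ll w) ≤ (1 - lam) * (jj u₂ - c * ll u₂) :=
    mul_le_mul_of_nonneg_left t2 (by linarith [hlam.2])
  have hsum := add_le_add e1 e2
  have hll' : c * ll w = c * (lam * ll u₁ + (1 - lam) * ll u₂) := by rw [hll]
  have hjj : jj w ≤ lam * jj u₁ + (1 - lam) * jj u₂ := by nlinarith [hsum, hll']
  rw [J_eq hw.1 hw.2, J_eq hu₁.1 hu₁.2, J_eq hu₂.1 hu₂.2]
  rw [show lam * (jj u₁ / Real.log 2) + (1 - lam) * (jj u₂ / Real.log 2)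
      = (lam * jj u₁ + (1 - lam) * jj u₂) / Real.log 2 by ring]
  exact div_le_div_of_nonneg_right hjj log2_pos.le
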